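/- In the Clifford algebra generated by elements φ_m (m ∈ ℤ + 1/2) with relations φ_m φ_n + φ_n φ_m = δ_{m,-n}·1, the elements h_n defined as the modes of h(z) = (1/2):φ(z)φ(-z): satisfy the Heisenberg commutation relations [h_m, h_n] = m δ_{m+n,0}·1, acting on the Fock space representation with vacuum |0⟩ annihilated by φ_n for n > 0. Concretely, h_n = (1/2)∑_{k ∈ ℤ+1/2} (-1)^{k+1/2} :φ_{-k} φ_{k+2n}: (with appropriate normal ordering), and these operators on the Fock space satisfy [h_m, h_n] = m δ_{m+n,0}. -/

import Mathlib

section Aux4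
variable {V : Type*} [AddCommGroup V] [Module ℚ V]

private lemma c_mul' (a b : ℤ) : (-1:ℚ)^a * (-1:ℚ)^b = (-1:ℚ)^(a+b) :=
  (zpow_add₀ (by norm_num) a b).symm

private lemma c_even' (k : ℤ) : (-1:ℚ)^(2*k) = 1 := by
  rw [zpow_mul]; norm_num

private lemma c_odd' (k : ℤ) : (-1:ℚ)^(2*k+1) = -1 := by
  rw [zpow_add₀ (by norm_num : (-1:ℚ) ≠ 0), c_even', zpow_one, one_mul]

private lemma collapse (I : Finset ℤ) (t : ℤ → ℤ) (co : ℤ → ℤ → ℚ) (W : ℤ → ℤ → V)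
    (P : ℤ → ℤ → Prop) [∀ l j, Decidable (P l j)] (hP : ∀ l j, P l j ↔ j = t l) :
    (∑ j ∈ I, ∑ l ∈ I, co j l • ((if P l j then (1:ℚ) else 0) • W l j))
      = ∑ l ∈ I, (if t l ∈ I then co (t l) l • W l (t l) else 0) := by
  rw [Finset.sum_comm]
  refine Finset.sum_congr rfl fun l _ => ?_
  rw [← Finset.sum_ite_eq' I (t l) (fun j => co j l • W l j)]
  refine Finset.sum_congr rfl fun j _ => ?_
  by_cases hc : j = t l
  · rw [if_pos ((hP l j).mpr hc), if_pos hc, one_smul]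
  · rw [if_neg (fun hp => hc ((hP l j).mp hp)), if_neg hc, zero_smul, smul_zero]

end Aux4

section Main
variable {V : Type*} [AddCommGroup V] [Module ℚ V]

private lemma c_odd2 (E : ℤ) (k : ℤ) (hE : E = 2*k+1) : (-1:ℚ)^E = -1 := by
  rw [hE]; exact c_odd' k

private lemma c_even2 (E : ℤ) (k : ℤ) (hE : E = 2*k) : (-1:ℚ)^E = 1 := by
  rw [hE]; exact c_even' k

private lemma swap2 (ψ : ℤ → Module.End ℚ V)
    (hCl : ∀ a b : ℤ, ψ a * ψ b + ψ b * ψ a =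
      if a + b = -1 then (1 : Module.End ℚ V) else 0) (x y : ℤ) :
    ψ x * ψ y = (if x + y = -1 then (1:ℚ) else 0) • 1 - ψ y * ψ x := by
  have h1 : (if x + y = -1 then (1:ℚ) else 0) • (1 : Module.End ℚ V)
      = if x + y = -1 then (1 : Module.End ℚ V) else 0 := by
    split_ifs <;> simp
  rw [h1]
  exact eq_sub_of_add_eq (hCl x y)

private lemma comm4' (ψ : ℤ → Module.End ℚ V)
    (hCl : ∀ a b : ℤ, ψ a * ψ b + ψ b * ψ a =
      if a + b = -1 then (1 : Module.End ℚ V) else 0) (a b c d : ℤ) :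
    ψ a * ψ b * (ψ c * ψ d) - ψ c * ψ d * (ψ a * ψ b) =
      (if b + c = -1 then (1:ℚ) else 0) • (ψ a * ψ d)
    - (if b + d = -1 then (1:ℚ) else 0) • (ψ a * ψ c)
    + (if a + c = -1 then (1:ℚ) else 0) • (ψ d * ψ b)
    - (if a + d = -1 then (1:ℚ) else 0) • (ψ c * ψ b) := by
  have e1 : ψ a * ψ b * (ψ c * ψ d)
      = (if b + c = -1 then (1:ℚ) else 0) • (ψ a * ψ d) - ψ a * ψ c * (ψ b * ψ d) := by
    calc ψ a * ψ b * (ψ c * ψ d) = ψ a * (ψ b * ψ c) * ψ d := by noncomm_ring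
    _ = ψ a * ((if b + c = -1 then (1:ℚ) else 0) • 1 - ψ c * ψ b) * ψ d := by
        rw [swap2 ψ hCl b c]
    _ = _ := by
        simp only [mul_sub, sub_mul, mul_smul_comm, smul_mul_assoc, mul_one, one_mul]
        noncomm_ring
  have e2 : ψ a * ψ c * (ψ b * ψ d)
      = (if b + d = -1 then (1:ℚ) else 0) • (ψ a * ψ c) - ψ a * ψ c * (ψ d * ψ b) := by
    rw [swap2 ψ hCl b d]
    simp only [mul_sub, mul_smul_comm, mul_one]
  have e3 : ψ a * ψ c * (ψ d * ψ b)
      = (if a + c = -1 then (1:ℚ) else 0) • (ψ d * ψ b) - ψ c * ψ a * (ψ d * ψ b) := by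
    conv_lhs => rw [swap2 ψ hCl a c]
    simp only [sub_mul, smul_mul_assoc, one_mul]
  have e4 : ψ c * ψ a * (ψ d * ψ b)
      = (if a + d = -1 then (1:ℚ) else 0) • (ψ c * ψ b) - ψ c * ψ d * (ψ a * ψ b) := by
    calc ψ c * ψ a * (ψ d * ψ b) = ψ c * (ψ a * ψ d) * ψ b := by noncomm_ring
    _ = ψ c * ((if a + d = -1 then (1:ℚ) else 0) • 1 - ψ d * ψ a) * ψ b := by
        rw [swap2 ψ hCl a d]
    _ = _ := by
        simp only [mul_sub, sub_mul, mul_smul_comm, smul_mul_assoc, mul_one, one_mul]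
        noncomm_ring
  rw [e1, e2, e3, e4]
  abel

private lemma main_alg (ψ : ℤ → Module.End ℚ V)
    (hCl : ∀ a b : ℤ, ψ a * ψ b + ψ b * ψ a =
      if a + b = -1 then (1 : Module.End ℚ V) else 0)
    (m n M : ℤ) (v : V) :
    (∑ j ∈ Finset.Icc (-M) M, ∑ l ∈ Finset.Icc (-M) M,
      ((-1:ℚ)^(j+1) * (-1:ℚ)^(l+1)) • ((ψ (-l-1) * ψ (l+2*m)) ((ψ (-j-1) * ψ (j+2*n)) v)))
    - (∑ j ∈ Finset.Icc (-M) M, ∑ l ∈ Finset.Icc (-M) M,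
      ((-1:ℚ)^(j+1) * (-1:ℚ)^(l+1)) • ((ψ (-l-1) * ψ (l+2*n)) ((ψ (-j-1) * ψ (j+2*m)) v)))
    = (∑ l ∈ Finset.Icc (-M) M,
        if l + 2*m ∈ Finset.Icc (-M) M then (ψ (-l-1) * ψ (l+2*m+2*n)) v else 0)
    + (∑ l ∈ Finset.Icc (-M) M,
        if -1-2*m-2*n-l ∈ Finset.Icc (-M) M then (ψ (-l-1) * ψ (l+2*m+2*n)) v else 0)
    - (∑ l ∈ Finset.Icc (-M) M,
        if -l-1 ∈ Finset.Icc (-M) M then (ψ (-(l-2*n)-1) * ψ (l-2*n+2*m+2*n)) v else 0)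
    - (∑ l ∈ Finset.Icc (-M) M,
        if l-2*n ∈ Finset.Icc (-M) M then (ψ (-(l-2*n)-1) * ψ (l-2*n+2*m+2*n)) v else 0) := by
  classical
  set I := Finset.Icc (-M) M with hI
  have hY : (∑ j ∈ I, ∑ l ∈ I,
      ((-1:ℚ)^(j+1) * (-1:ℚ)^(l+1)) • ((ψ (-l-1) * ψ (l+2*n)) ((ψ (-j-1) * ψ (j+2*m)) v)))
      = ∑ j ∈ I, ∑ l ∈ I,
      ((-1:ℚ)^(j+1) * (-1:ℚ)^(l+1)) • ((ψ (-j-1) * ψ (j+2*n)) ((ψ (-l-1) * ψ (l+2*m)) v)) := by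
    rw [Finset.sum_comm]
    exact Finset.sum_congr rfl fun j _ => Finset.sum_congr rfl fun l _ => by
      rw [mul_comm ((-1:ℚ)^(l+1))]
  rw [hY, ← Finset.sum_sub_distrib]
  have step2 : ∀ j ∈ I, ∀ l ∈ I,
      ((-1:ℚ)^(j+1) * (-1:ℚ)^(l+1)) • ((ψ (-l-1) * ψ (l+2*m)) ((ψ (-j-1) * ψ (j+2*n)) v))
      - ((-1:ℚ)^(j+1) * (-1:ℚ)^(l+1)) • ((ψ (-j-1) * ψ (j+2*n)) ((ψ (-l-1) * ψ (l+2*m)) v))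
      = ((-1:ℚ)^(j+1) * (-1:ℚ)^(l+1)) • ((if (l+2*m) + (-j-1) = -1 then (1:ℚ) else 0)
            • ((ψ (-l-1) * ψ (j+2*n)) v))
      - ((-1:ℚ)^(j+1) * (-1:ℚ)^(l+1)) • ((if (l+2*m) + (j+2*n) = -1 then (1:ℚ) else 0)
            • ((ψ (-l-1) * ψ (-j-1)) v))
      + ((-1:ℚ)^(j+1) * (-1:ℚ)^(l+1)) • ((if (-l-1) + (-j-1) = -1 then (1:ℚ) else 0)
            • ((ψ (j+2*n) * ψ (l+2*m)) v))
      - ((-1:ℚ)^(j+1) * (-1:ℚ)^(l+1)) • ((if (-l-1) + (j+2*n) = -1 then (1:ℚ) else 0)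
            • ((ψ (-j-1) * ψ (l+2*m)) v)) := by
    intro j _ l _
    rw [← smul_sub, ← Module.End.mul_apply, ← Module.End.mul_apply, ← LinearMap.sub_apply,
        comm4' ψ hCl (-l-1) (l+2*m) (-j-1) (j+2*n)]
    simp only [LinearMap.add_apply, LinearMap.sub_apply, LinearMap.smul_apply]
    rw [smul_sub, smul_add, smul_sub]
  refine Eq.trans (Finset.sum_congr rfl (fun j hj => Eq.trans (Finset.sum_sub_distrib _ _).symm
    (Finset.sum_congr rfl fun l hl => step2 j hj l hl))) ?_
  simp only [Finset.sum_add_distrib, Finset.sum_sub_distrib]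
  rw [collapse I (fun l => l + 2*m) _ _ _ (fun l j => by beta_reduce; omega),
      collapse I (fun l => -1-2*m-2*n-l) _ _ _ (fun l j => by beta_reduce; omega),
      collapse I (fun l => -l-1) _ _ _ (fun l j => by beta_reduce; omega),
      collapse I (fun l => l-2*n) _ _ _ (fun l j => by beta_reduce; omega)]
  have hT1 : (∑ l ∈ I, if l + 2*m ∈ I then
        ((-1:ℚ)^(l + 2*m + 1) * (-1:ℚ)^(l+1)) • ((ψ (-l-1) * ψ (l + 2*m + 2*n)) v) else 0)
      = ∑ l ∈ I, if l + 2*m ∈ I then (ψ (-l-1) * ψ (l+2*m+2*n)) v else 0 := by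
    refine Finset.sum_congr rfl fun l _ => ?_
    split_ifs with hmem
    · rw [c_mul', c_even2 _ (l+m+1) (by ring), one_smul]
    · rfl
  have hT2 : (∑ l ∈ I, if -1 - 2*m - 2*n - l ∈ I then
        ((-1:ℚ)^(-1 - 2*m - 2*n - l + 1) * (-1:ℚ)^(l+1)) •
          ((ψ (-l-1) * ψ (-(-1 - 2*m - 2*n - l) - 1)) v) else 0)
      = -∑ l ∈ I, if -1-2*m-2*n-l ∈ I then (ψ (-l-1) * ψ (l+2*m+2*n)) v else 0 := by
    rw [← Finset.sum_neg_distrib]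
    refine Finset.sum_congr rfl fun l _ => ?_
    split_ifs with hmem
    · rw [show (-(-1 - 2*m - 2*n - l) - 1 : ℤ) = l+2*m+2*n from by ring, c_mul',
        c_odd2 _ (-m-n) (by ring), neg_one_smul]
    · rw [neg_zero]
  have hT3 : (∑ l ∈ I, if -l-1 ∈ I then
        ((-1:ℚ)^(-l - 1 + 1) * (-1:ℚ)^(l+1)) • ((ψ (-l - 1 + 2*n) * ψ (l + 2*m)) v) else 0)
      = -∑ l ∈ I, if -l-1 ∈ I then (ψ (-(l-2*n)-1) * ψ (l-2*n+2*m+2*n)) v else 0 := by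
    rw [← Finset.sum_neg_distrib]
    refine Finset.sum_congr rfl fun l _ => ?_
    split_ifs with hmem
    · rw [show (-l - 1 + 2*n : ℤ) = -(l-2*n)-1 from by ring,
        show (l + 2*m : ℤ) = l-2*n+2*m+2*n from by ring, c_mul',
        c_odd2 _ 0 (by ring), neg_one_smul]
    · rw [neg_zero]
  have hT4 : (∑ l ∈ I, if l - 2*n ∈ I then
        ((-1:ℚ)^(l - 2*n + 1) * (-1:ℚ)^(l+1)) • ((ψ (-(l - 2*n) - 1) * ψ (l + 2*m)) v) else 0)
      = ∑ l ∈ I, if l-2*n ∈ I then (ψ (-(l-2*n)-1) * ψ (l-2*n+2*m+2*n)) v else 0 := by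
    refine Finset.sum_congr rfl fun l _ => ?_
    split_ifs with hmem
    · rw [show (l + 2*m : ℤ) = l-2*n+2*m+2*n from by ring, c_mul',
        c_even2 _ (l-n+1) (by ring), one_smul]
    · rfl
  rw [hT1, hT2, hT3, hT4]
  abel

end Main

section Eval
variable {V : Type*} [AddCommGroup V] [Module ℚ V]

private lemma count_sum (g : ℤ → V) (v : V) (U : Finset ℤ) (P : ℤ → Prop) [DecidablePred P]
    (N : ℤ) (t : ℤ)
    (hlow : ∀ l, l ≤ -N-1 → g l = v)
    (hhigh : ∀ l, N ≤ l → g l = 0)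
    (hP : ∀ l, (l ∈ U ∧ P l ∧ l ≤ -N-1) ↔ (t ≤ l ∧ l ≤ -N-1))
    (hmid : ∀ l, -N ≤ l → l ≤ N-1 → (l ∈ U ∧ P l)) :
    ∑ l ∈ U, (if P l then g l else 0)
      = ((Finset.Icc t (-N-1)).card : ℚ) • v + ∑ l ∈ Finset.Icc (-N) (N-1), g l := by
  classical
  rw [← Finset.sum_filter]
  rw [← Finset.sum_filter_add_sum_filter_not (U.filter P) (fun l => l ≤ -N-1)]
  have hL : (U.filter P).filter (fun l => l ≤ -N-1) = Finset.Icc t (-N-1) := by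
    ext l
    simp only [Finset.mem_filter, Finset.mem_Icc, and_assoc]
    constructor
    · rintro ⟨h1, h2, h3⟩
      have := (hP l).mp ⟨h1, h2, h3⟩
      exact ⟨this.1, this.2⟩
    · rintro ⟨h1, h2⟩
      have := (hP l).mpr ⟨h1, h2⟩
      exact ⟨this.1, this.2.1, this.2.2⟩
  have hLsum : ∑ l ∈ (U.filter P).filter (fun l => l ≤ -N-1), g l
      = ((Finset.Icc t (-N-1)).card : ℚ) • v := by
    rw [hL]
    rw [Finset.sum_congr rfl (fun l hl => hlow l (Finset.mem_Icc.mp hl).2)]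
    rw [Finset.sum_const]
    rw [← Nat.cast_smul_eq_nsmul ℚ]
  have hRsum : ∑ l ∈ (U.filter P).filter (fun l => ¬ l ≤ -N-1), g l
      = ∑ l ∈ Finset.Icc (-N) (N-1), g l := by
    refine (Finset.sum_subset ?_ ?_).symm
    · intro l hl
      rw [Finset.mem_Icc] at hl
      obtain ⟨h1, h2⟩ := hmid l hl.1 hl.2
      simp only [Finset.mem_filter]
      exact ⟨⟨h1, h2⟩, by omega⟩
    · intro l hl hl2
      simp only [Finset.mem_filter] at hl
      rw [Finset.mem_Icc] at hl2
      exact hhigh l (by omega)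
  rw [hLsum, hRsum]

end Eval

section Eval2
variable {V : Type*} [AddCommGroup V] [Module ℚ V]

private lemma eval_sums (ψ : ℤ → Module.End ℚ V)
    (hCl : ∀ a b : ℤ, ψ a * ψ b + ψ b * ψ a =
      if a + b = -1 then (1 : Module.End ℚ V) else 0)
    (m n M N am an : ℤ) (v : V)
    (ham1 : -am ≤ m) (ham2 : m ≤ am) (han1 : -an ≤ n) (han2 : n ≤ an)
    (hN0 : 0 ≤ N) (hN : ∀ k, N ≤ k → ψ k v = 0)
    (hM : 3*(N + 2*am + 2*an) + 10 ≤ M) :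
    (∑ l ∈ Finset.Icc (-M) M,
        if l + 2*m ∈ Finset.Icc (-M) M then (ψ (-l-1) * ψ (l+2*m+2*n)) v else 0)
    + (∑ l ∈ Finset.Icc (-M) M,
        if -1-2*m-2*n-l ∈ Finset.Icc (-M) M then (ψ (-l-1) * ψ (l+2*m+2*n)) v else 0)
    - (∑ l ∈ Finset.Icc (-M) M,
        if -l-1 ∈ Finset.Icc (-M) M then (ψ (-(l-2*n)-1) * ψ (l-2*n+2*m+2*n)) v else 0)
    - (∑ l ∈ Finset.Icc (-M) M,
        if l-2*n ∈ Finset.Icc (-M) M then (ψ (-(l-2*n)-1) * ψ (l-2*n+2*m+2*n)) v else 0)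
    = if m + n = 0 then (4*(m:ℚ)) • v else 0 := by
  classical
  have hre : ∀ F : ℤ → V, ∑ l ∈ Finset.Icc (-M) M, F l
      = ∑ k ∈ Finset.Icc (-M-2*n) (M-2*n), F (k+2*n) := by
    intro F
    rw [show Finset.Icc (-M) M = Finset.map (addRightEmbedding (2*n))
        (Finset.Icc (-M-2*n) (M-2*n)) from by rw [Finset.map_add_right_Icc]; congr 1 <;> ring,
      Finset.sum_map]
    rfl
  have hZ3 : (∑ l ∈ Finset.Icc (-M) M,
        if -l-1 ∈ Finset.Icc (-M) M then (ψ (-(l-2*n)-1) * ψ (l-2*n+2*m+2*n)) v else 0)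
      = ∑ k ∈ Finset.Icc (-M-2*n) (M-2*n),
        (if -(k+2*n)-1 ∈ Finset.Icc (-M) M then (ψ (-k-1) * ψ (k+2*m+2*n)) v else 0) := by
    rw [hre (fun l => if -l-1 ∈ Finset.Icc (-M) M
        then (ψ (-(l-2*n)-1) * ψ (l-2*n+2*m+2*n)) v else 0)]
    refine Finset.sum_congr rfl fun k _ => ?_
    rw [show (k + 2*n - 2*n : ℤ) = k from by ring]
  have hZ4 : (∑ l ∈ Finset.Icc (-M) M,
        if l-2*n ∈ Finset.Icc (-M) M then (ψ (-(l-2*n)-1) * ψ (l-2*n+2*m+2*n)) v else 0)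
      = ∑ k ∈ Finset.Icc (-M-2*n) (M-2*n),
        (if k ∈ Finset.Icc (-M) M then (ψ (-k-1) * ψ (k+2*m+2*n)) v else 0) := by
    rw [hre (fun l => if l-2*n ∈ Finset.Icc (-M) M
        then (ψ (-(l-2*n)-1) * ψ (l-2*n+2*m+2*n)) v else 0)]
    refine Finset.sum_congr rfl fun k _ => ?_
    rw [show (k + 2*n - 2*n : ℤ) = k from by ring]
  rw [hZ3, hZ4]
  set U : Finset ℤ := Finset.Icc (-M-2*an) (M+2*an) with hU
  have hsubI : Finset.Icc (-M) M ⊆ U := Finset.Icc_subset_Icc (by omega) (by omega)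
  have hsubI' : Finset.Icc (-M-2*n) (M-2*n) ⊆ U := Finset.Icc_subset_Icc (by omega) (by omega)
  have hext : ∀ (J : Finset ℤ) (P : ℤ → Prop) (_ : DecidablePred P) (G : ℤ → V), J ⊆ U →
      (∑ l ∈ J, if P l then G l else 0) = ∑ l ∈ U, if l ∈ J ∧ P l then G l else 0 := by
    intro J P _ G hJ
    rw [show (∑ l ∈ U, if l ∈ J ∧ P l then G l else 0)
        = ∑ l ∈ U, if l ∈ J then (if P l then G l else 0) else 0 from
      Finset.sum_congr rfl fun l _ => by by_cases h1 : l ∈ J <;> by_cases h2 : P l <;>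
        simp [h1, h2]]
    rw [Finset.sum_ite_mem, Finset.inter_eq_right.mpr hJ]
  rw [hext _ _ _ _ hsubI, hext _ _ _ _ hsubI, hext _ _ _ _ hsubI', hext _ _ _ _ hsubI']
  by_cases hmn : m + n = 0
  · rw [if_pos hmn]
    have hgv : ∀ k : ℤ, k ≤ -N-1 → (ψ (-k-1) * ψ (k+2*m+2*n)) v = v := by
      intro k hk
      rw [swap2 ψ hCl]
      simp only [LinearMap.sub_apply, LinearMap.smul_apply, Module.End.one_apply,
        Module.End.mul_apply]
      rw [if_pos (show (-k-1 + (k + 2*m + 2*n) = -1) from by omega), hN (-k-1) (by omega),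
        map_zero, one_smul, sub_zero]
    have hgh : ∀ k : ℤ, N ≤ k → (ψ (-k-1) * ψ (k+2*m+2*n)) v = 0 := by
      intro k hk
      rw [Module.End.mul_apply, hN (k + 2*m + 2*n) (by omega), map_zero]
    rcases le_or_gt 0 m with hm | hm
    · rw [count_sum _ v U _ N (-M) hgv hgh
          (fun l => by simp only [hU, Finset.mem_Icc]; omega)
          (fun l h1 h2 => by simp only [hU, Finset.mem_Icc]; omega),
        count_sum _ v U _ N (-M) hgv hgh
          (fun l => by simp only [hU, Finset.mem_Icc]; omega)
          (fun l h1 h2 => by simp only [hU, Finset.mem_Icc]; omega),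
        count_sum _ v U _ N (-M-2*n) hgv hgh
          (fun l => by simp only [hU, Finset.mem_Icc]; omega)
          (fun l h1 h2 => by simp only [hU, Finset.mem_Icc]; omega),
        count_sum _ v U _ N (-M-2*n) hgv hgh
          (fun l => by simp only [hU, Finset.mem_Icc]; omega)
          (fun l h1 h2 => by simp only [hU, Finset.mem_Icc]; omega)]
      have hcoef : ((Finset.Icc (-M) (-N-1)).card : ℚ)
          + ((Finset.Icc (-M) (-N-1)).card : ℚ)
          - ((Finset.Icc (-M-2*n) (-N-1)).card : ℚ)
          - ((Finset.Icc (-M-2*n) (-N-1)).card : ℚ) = 4*(m:ℚ) := by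
        have hz : ((Finset.Icc (-M) (-N-1)).card : ℤ)
            + ((Finset.Icc (-M) (-N-1)).card : ℤ)
            - ((Finset.Icc (-M-2*n) (-N-1)).card : ℤ)
            - ((Finset.Icc (-M-2*n) (-N-1)).card : ℤ) = 4*m := by
          simp only [Int.card_Icc]
          omega
        exact_mod_cast hz
      rw [← hcoef]
      module
    · rw [count_sum _ v U _ N (-M-2*m) hgv hgh
          (fun l => by simp only [hU, Finset.mem_Icc]; omega)
          (fun l h1 h2 => by simp only [hU, Finset.mem_Icc]; omega),
        count_sum _ v U _ N (-M) hgv hgh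
          (fun l => by simp only [hU, Finset.mem_Icc]; omega)
          (fun l h1 h2 => by simp only [hU, Finset.mem_Icc]; omega),
        count_sum _ v U _ N (-M-2*n) hgv hgh
          (fun l => by simp only [hU, Finset.mem_Icc]; omega)
          (fun l h1 h2 => by simp only [hU, Finset.mem_Icc]; omega),
        count_sum _ v U _ N (-M) hgv hgh
          (fun l => by simp only [hU, Finset.mem_Icc]; omega)
          (fun l h1 h2 => by simp only [hU, Finset.mem_Icc]; omega)]
      have hcoef : ((Finset.Icc (-M-2*m) (-N-1)).card : ℚ)
          + ((Finset.Icc (-M) (-N-1)).card : ℚ)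
          - ((Finset.Icc (-M-2*n) (-N-1)).card : ℚ)
          - ((Finset.Icc (-M) (-N-1)).card : ℚ) = 4*(m:ℚ) := by
        have hz : ((Finset.Icc (-M-2*m) (-N-1)).card : ℤ)
            + ((Finset.Icc (-M) (-N-1)).card : ℤ)
            - ((Finset.Icc (-M-2*n) (-N-1)).card : ℤ)
            - ((Finset.Icc (-M) (-N-1)).card : ℤ) = 4*m := by
          simp only [Int.card_Icc]
          omega
        exact_mod_cast hz
      rw [← hcoef]
      module
  · rw [if_neg hmn]
    have hg0 : ∀ k : ℤ, N ≤ k + (2*m+2*n) ∨ k ≤ -N-1 → (ψ (-k-1) * ψ (k+2*m+2*n)) v = 0 := by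
      intro k hk
      rcases hk with hk | hk
      · rw [Module.End.mul_apply, hN (k + 2*m + 2*n) (by omega), map_zero]
      · rw [swap2 ψ hCl]
        simp only [LinearMap.sub_apply, LinearMap.smul_apply, Module.End.one_apply,
          Module.End.mul_apply]
        rw [if_neg (show ¬(-k-1 + (k + 2*m + 2*n) = -1) from by omega), hN (-k-1) (by omega)]
        simp
    rw [← Finset.sum_add_distrib, ← Finset.sum_sub_distrib, ← Finset.sum_sub_distrib]
    refine Finset.sum_eq_zero fun l hl => ?_
    rw [Finset.mem_Icc] at hl
    by_cases hcase : -N ≤ l ∧ l ≤ N + 2*am + 2*an - 1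
    · have c1 : l ∈ Finset.Icc (-M) M ∧ l + 2*m ∈ Finset.Icc (-M) M :=
        ⟨Finset.mem_Icc.mpr ⟨by omega, by omega⟩, Finset.mem_Icc.mpr ⟨by omega, by omega⟩⟩
      have c2 : l ∈ Finset.Icc (-M) M ∧ -1-2*m-2*n-l ∈ Finset.Icc (-M) M :=
        ⟨Finset.mem_Icc.mpr ⟨by omega, by omega⟩, Finset.mem_Icc.mpr ⟨by omega, by omega⟩⟩
      have c3 : l ∈ Finset.Icc (-M-2*n) (M-2*n) ∧ -(l+2*n)-1 ∈ Finset.Icc (-M) M :=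
        ⟨Finset.mem_Icc.mpr ⟨by omega, by omega⟩, Finset.mem_Icc.mpr ⟨by omega, by omega⟩⟩
      have c4 : l ∈ Finset.Icc (-M-2*n) (M-2*n) ∧ l ∈ Finset.Icc (-M) M :=
        ⟨Finset.mem_Icc.mpr ⟨by omega, by omega⟩, Finset.mem_Icc.mpr ⟨by omega, by omega⟩⟩
      rw [if_pos c1, if_pos c2, if_pos c3, if_pos c4]
      abel
    · rw [hg0 l (by omega)]
      simp

end Eval2


section Aux2
variable {V : Type*} [AddCommGroup V] [Module ℚ V]

private lemma NO_vanish (ψ : ℤ → Module.End ℚ V)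
    (NO : ℤ → ℤ → Module.End ℚ V)
    (hNO : ∀ a b : ℤ, NO a b = if 0 ≤ b then ψ a * ψ b else -(ψ b * ψ a))
    (v : V) (N : ℤ) (hN0 : 0 ≤ N) (hN : ∀ k, N ≤ k → ψ k v = 0) (n j : ℤ)
    (hj : N + 2*|n| ≤ j ∨ j ≤ -(N + 2*|n|) - 1) :
    NO (-j - 1) (j + 2*n) v = 0 := by
  have habs1 : -|n| ≤ n := neg_abs_le n
  have habs2 : n ≤ |n| := le_abs_self n
  rcases hj with hj | hj
  · have hb : (0:ℤ) ≤ j + 2*n := by omega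
    rw [hNO, if_pos hb, Module.End.mul_apply, hN (j + 2*n) (by omega), map_zero]
  · have hb : ¬ (0:ℤ) ≤ j + 2*n := by omega
    rw [hNO, if_neg hb]
    have : ψ (-j - 1) v = 0 := hN _ (by omega)
    simp [Module.End.mul_apply, this]

private lemma trunc (ψ : ℤ → Module.End ℚ V)
    (NO : ℤ → ℤ → Module.End ℚ V)
    (hNO : ∀ a b : ℤ, NO a b = if 0 ≤ b then ψ a * ψ b else -(ψ b * ψ a))
    (h : ℤ → Module.End ℚ V)
    (hh : ∀ (n : ℤ) (v : V), ∃ A : Finset ℤ, ∀ B : Finset ℤ, A ⊆ B →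
      h n v = (1 / 2 : ℚ) • ∑ j ∈ B, ((-1 : ℚ) ^ (j + 1)) • NO (-j - 1) (j + 2 * n) v)
    (v : V) (n : ℤ) (N : ℤ) (hN0 : 0 ≤ N) (hN : ∀ k, N ≤ k → ψ k v = 0)
    (M : ℤ) (hM : N + 2*|n| ≤ M) :
    h n v = (1 / 2 : ℚ) • ∑ j ∈ Finset.Icc (-M) M,
      ((-1 : ℚ) ^ (j + 1)) • NO (-j - 1) (j + 2 * n) v := by
  obtain ⟨A, hA⟩ := hh n v
  rw [hA (A ∪ Finset.Icc (-M) M) Finset.subset_union_left]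
  congr 1
  refine (Finset.sum_subset Finset.subset_union_right ?_).symm
  intro j _ hj2
  rw [Finset.mem_Icc] at hj2
  rw [NO_vanish ψ NO hNO v N hN0 hN n j (by omega), smul_zero]

end Aux2

section Aux5
variable {V : Type*} [AddCommGroup V] [Module ℚ V]

private lemma NOeq (ψ : ℤ → Module.End ℚ V)
    (hCl : ∀ a b : ℤ, ψ a * ψ b + ψ b * ψ a =
      if a + b = -1 then (1 : Module.End ℚ V) else 0)
    (NO : ℤ → ℤ → Module.End ℚ V)
    (hNO : ∀ a b : ℤ, NO a b = if 0 ≤ b then ψ a * ψ b else -(ψ b * ψ a))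
    (n j : ℤ) :
    NO (-j - 1) (j + 2 * n) = ψ (-j - 1) * ψ (j + 2 * n)
      - (if n = 0 ∧ j < 0 then (1:ℚ) else 0) • 1 := by
  rw [hNO]
  split_ifs with h1 h2
  · exfalso; omega
  · simp
  · rw [swap2 ψ hCl (j + 2*n) (-j-1)]
    have : j + 2*n + (-j - 1) = -1 := by omega
    rw [if_pos this]; abel
  · rw [swap2 ψ hCl (j + 2*n) (-j-1)]
    have : ¬ (j + 2*n + (-j - 1) = -1) := by omega
    rw [if_neg this]; simp

private lemma double (ψ : ℤ → Module.End ℚ V)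
    (hFock : ∀ v : V, ∃ N : ℤ, ∀ k : ℤ, N ≤ k → ψ k v = 0)
    (NO : ℤ → ℤ → Module.End ℚ V)
    (hNO : ∀ a b : ℤ, NO a b = if 0 ≤ b then ψ a * ψ b else -(ψ b * ψ a))
    (h : ℤ → Module.End ℚ V)
    (hh : ∀ (n : ℤ) (v : V), ∃ A : Finset ℤ, ∀ B : Finset ℤ, A ⊆ B →
      h n v = (1 / 2 : ℚ) • ∑ j ∈ B, ((-1 : ℚ) ^ (j + 1)) • NO (-j - 1) (j + 2 * n) v)
    (m n : ℤ) (v : V) :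
    ∃ N2 : ℤ, ∀ M : ℤ, N2 ≤ M →
      h m (h n v) = (1/4 : ℚ) • ∑ j ∈ Finset.Icc (-M) M, ∑ l ∈ Finset.Icc (-M) M,
        (((-1:ℚ)^(j+1)) * ((-1:ℚ)^(l+1))) •
          (NO (-l - 1) (l + 2*m)) ((NO (-j - 1) (j + 2*n)) v) := by
  classical
  choose NB hNB using hFock
  set N : ℤ := max (NB v) 0 with hNdef
  have hN0 : (0:ℤ) ≤ N := le_max_right _ _
  have hN : ∀ k, N ≤ k → ψ k v = 0 := fun k hk => hNB v k (le_trans (le_max_left _ _) hk)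
  set K : ℤ := N + 2*|n| with hKdef
  set W : Finset ℤ := Finset.Icc (-K) (K-1) with hWdef
  set S : ℕ := W.sup (fun j => (max (NB ((NO (-j - 1) (j + 2*n)) v)) 0).toNat) with hSdef
  refine ⟨max K ((S:ℤ) + 2*|m|), fun M hM => ?_⟩
  have hMK : K ≤ M := le_trans (le_max_left _ _) hM
  have hMS : (S:ℤ) + 2*|m| ≤ M := le_trans (le_max_right _ _) hM
  have step1 : h n v = (1 / 2 : ℚ) • ∑ j ∈ Finset.Icc (-M) M,
      ((-1 : ℚ) ^ (j + 1)) • NO (-j - 1) (j + 2 * n) v :=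
    trunc ψ NO hNO h hh v n N hN0 hN M hMK
  have step3 : ∀ j ∈ Finset.Icc (-M) M,
      h m ((NO (-j - 1) (j + 2*n)) v) = (1 / 2 : ℚ) • ∑ l ∈ Finset.Icc (-M) M,
        ((-1 : ℚ) ^ (l + 1)) • NO (-l - 1) (l + 2 * m) ((NO (-j - 1) (j + 2*n)) v) := by
    intro j _
    by_cases hjW : j ∈ W
    · set w := (NO (-j - 1) (j + 2*n)) v with hwdef
      have hNw0 : (0:ℤ) ≤ max (NB w) 0 := le_max_right _ _
      have hNw : ∀ k, max (NB w) 0 ≤ k → ψ k w = 0 :=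
        fun k hk => hNB w k (le_trans (le_max_left _ _) hk)
      refine trunc ψ NO hNO h hh w m _ hNw0 hNw M ?_
      have hle : (max (NB w) 0).toNat ≤ S :=
        Finset.le_sup (f := fun j => (max (NB ((NO (-j - 1) (j + 2*n)) v)) 0).toNat) hjW
      have : max (NB w) 0 ≤ (S:ℤ) := by
        calc max (NB w) 0 ≤ ((max (NB w) 0).toNat : ℤ) := Int.self_le_toNat _
        _ ≤ (S:ℤ) := by exact_mod_cast hle
      omega
    · have hw0 : (NO (-j - 1) (j + 2*n)) v = 0 := by
        apply NO_vanish ψ NO hNO v N hN0 hN n j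
        rw [hWdef, Finset.mem_Icc] at hjW
        omega
      rw [hw0, map_zero]
      simp
  rw [step1, map_smul, map_sum]
  have step4 : ∀ j ∈ Finset.Icc (-M) M,
      h m (((-1 : ℚ) ^ (j + 1)) • NO (-j - 1) (j + 2 * n) v)
      = ∑ l ∈ Finset.Icc (-M) M, ((1/2 : ℚ) * (((-1:ℚ)^(j+1)) * ((-1:ℚ)^(l+1)))) •
          (NO (-l - 1) (l + 2*m)) ((NO (-j - 1) (j + 2*n)) v) := by
    intro j hj
    rw [map_smul, step3 j hj, smul_smul, Finset.smul_sum]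
    refine Finset.sum_congr rfl (fun l _ => ?_)
    rw [smul_smul]
    ring_nf
  rw [Finset.sum_congr rfl step4]
  simp only [Finset.smul_sum, smul_smul]
  refine Finset.sum_congr rfl (fun j _ => Finset.sum_congr rfl (fun l _ => ?_))
  ring_nf

private lemma NOdiff (ψ : ℤ → Module.End ℚ V)
    (hCl : ∀ a b : ℤ, ψ a * ψ b + ψ b * ψ a =
      if a + b = -1 then (1 : Module.End ℚ V) else 0)
    (NO : ℤ → ℤ → Module.End ℚ V)
    (hNO : ∀ a b : ℤ, NO a b = if 0 ≤ b then ψ a * ψ b else -(ψ b * ψ a))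
    (m n M : ℤ) (v : V) :
    (∑ j ∈ Finset.Icc (-M) M, ∑ l ∈ Finset.Icc (-M) M,
      (((-1:ℚ)^(j+1)) * ((-1:ℚ)^(l+1))) • (NO (-l - 1) (l + 2*m)) ((NO (-j - 1) (j + 2*n)) v))
    - (∑ j ∈ Finset.Icc (-M) M, ∑ l ∈ Finset.Icc (-M) M,
      (((-1:ℚ)^(j+1)) * ((-1:ℚ)^(l+1))) • (NO (-l - 1) (l + 2*n)) ((NO (-j - 1) (j + 2*m)) v))
    = (∑ j ∈ Finset.Icc (-M) M, ∑ l ∈ Finset.Icc (-M) M,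
      ((-1:ℚ)^(j+1) * (-1:ℚ)^(l+1)) • ((ψ (-l-1) * ψ (l+2*m)) ((ψ (-j-1) * ψ (j+2*n)) v)))
    - (∑ j ∈ Finset.Icc (-M) M, ∑ l ∈ Finset.Icc (-M) M,
      ((-1:ℚ)^(j+1) * (-1:ℚ)^(l+1)) • ((ψ (-l-1) * ψ (l+2*n)) ((ψ (-j-1) * ψ (j+2*m)) v))) := by
  classical
  set I := Finset.Icc (-M) M with hI
  have expand : ∀ (m' n' j l : ℤ), (NO (-l - 1) (l + 2*m')) ((NO (-j - 1) (j + 2*n')) v)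
      = (ψ (-l-1) * ψ (l+2*m')) ((ψ (-j-1) * ψ (j+2*n')) v)
        - (if n' = 0 ∧ j < 0 then (1:ℚ) else 0) • ((ψ (-l-1) * ψ (l+2*m')) v)
        - (if m' = 0 ∧ l < 0 then (1:ℚ) else 0) • ((ψ (-j-1) * ψ (j+2*n')) v)
        + ((if m' = 0 ∧ l < 0 then (1:ℚ) else 0) * (if n' = 0 ∧ j < 0 then (1:ℚ) else 0)) • v := by
    intro m' n' j l
    rw [NOeq ψ hCl NO hNO n' j, NOeq ψ hCl NO hNO m' l]
    simp only [LinearMap.sub_apply, LinearMap.smul_apply, Module.End.one_apply, map_sub, map_smul]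
    module
  have key1 : ∀ (m' n' : ℤ),
      (∑ j ∈ I, ∑ l ∈ I, (((-1:ℚ)^(j+1)) * ((-1:ℚ)^(l+1))) •
        (NO (-l - 1) (l + 2*m')) ((NO (-j - 1) (j + 2*n')) v))
      = (∑ j ∈ I, ∑ l ∈ I, (((-1:ℚ)^(j+1)) * ((-1:ℚ)^(l+1))) •
          ((ψ (-l-1) * ψ (l+2*m')) ((ψ (-j-1) * ψ (j+2*n')) v)))
        - (∑ j ∈ I, ∑ l ∈ I, ((((-1:ℚ)^(j+1)) * ((-1:ℚ)^(l+1))) *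
            (if n' = 0 ∧ j < 0 then (1:ℚ) else 0)) • ((ψ (-l-1) * ψ (l+2*m')) v))
        - (∑ j ∈ I, ∑ l ∈ I, ((((-1:ℚ)^(j+1)) * ((-1:ℚ)^(l+1))) *
            (if m' = 0 ∧ l < 0 then (1:ℚ) else 0)) • ((ψ (-j-1) * ψ (j+2*n')) v))
        + (∑ j ∈ I, ∑ l ∈ I, ((((-1:ℚ)^(j+1)) * ((-1:ℚ)^(l+1))) *
            ((if m' = 0 ∧ l < 0 then (1:ℚ) else 0) * (if n' = 0 ∧ j < 0 then (1:ℚ) else 0))) • v) := by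
    intro m' n'
    rw [← Finset.sum_sub_distrib, ← Finset.sum_sub_distrib, ← Finset.sum_add_distrib]
    refine Finset.sum_congr rfl fun j _ => ?_
    rw [← Finset.sum_sub_distrib, ← Finset.sum_sub_distrib, ← Finset.sum_add_distrib]
    refine Finset.sum_congr rfl fun l _ => ?_
    rw [expand m' n' j l]
    module
  have swapsum : ∀ (f : ℤ → ℤ → V), ∑ j ∈ I, ∑ l ∈ I, f j l = ∑ j ∈ I, ∑ l ∈ I, f l j :=
    fun f => Finset.sum_comm
  have hC1 : (∑ j ∈ I, ∑ l ∈ I, ((((-1:ℚ)^(j+1)) * ((-1:ℚ)^(l+1))) *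
        (if n = 0 ∧ l < 0 then (1:ℚ) else 0)) • ((ψ (-j-1) * ψ (j+2*m)) v))
      = (∑ j ∈ I, ∑ l ∈ I, ((((-1:ℚ)^(j+1)) * ((-1:ℚ)^(l+1))) *
        (if n = 0 ∧ j < 0 then (1:ℚ) else 0)) • ((ψ (-l-1) * ψ (l+2*m)) v)) := by
    rw [swapsum]
    exact Finset.sum_congr rfl fun j _ => Finset.sum_congr rfl fun l _ => by
      congr 1; ring
  have hC2 : (∑ j ∈ I, ∑ l ∈ I, ((((-1:ℚ)^(j+1)) * ((-1:ℚ)^(l+1))) *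
        (if m = 0 ∧ j < 0 then (1:ℚ) else 0)) • ((ψ (-l-1) * ψ (l+2*n)) v))
      = (∑ j ∈ I, ∑ l ∈ I, ((((-1:ℚ)^(j+1)) * ((-1:ℚ)^(l+1))) *
        (if m = 0 ∧ l < 0 then (1:ℚ) else 0)) • ((ψ (-j-1) * ψ (j+2*n)) v)) := by
    rw [swapsum]
    exact Finset.sum_congr rfl fun j _ => Finset.sum_congr rfl fun l _ => by
      congr 1; ring
  have hC3 : (∑ j ∈ I, ∑ l ∈ I, ((((-1:ℚ)^(j+1)) * ((-1:ℚ)^(l+1))) *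
        ((if n = 0 ∧ l < 0 then (1:ℚ) else 0) * (if m = 0 ∧ j < 0 then (1:ℚ) else 0))) • v)
      = (∑ j ∈ I, ∑ l ∈ I, ((((-1:ℚ)^(j+1)) * ((-1:ℚ)^(l+1))) *
        ((if m = 0 ∧ l < 0 then (1:ℚ) else 0) * (if n = 0 ∧ j < 0 then (1:ℚ) else 0))) • v) := by
    rw [swapsum]
    exact Finset.sum_congr rfl fun j _ => Finset.sum_congr rfl fun l _ => by
      congr 1; ring
  rw [key1 m n, key1 n m, hC1, hC2, hC3]
  abel

end Aux5

/-- In the Clifford algebra with generators `φ_m`, `m ∈ ℤ + 1/2` (here `ψ j` denotes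
`φ_{j+1/2}` for `j : ℤ`), acting on a Fock-type representation (each vector is annihilated
by almost all annihilation modes), the modes `h_n` of `h(z) = (1/2):φ(z)φ(-z):`, given by
`h_n = (1/2) ∑_{k ∈ ℤ+1/2} (-1)^{k+1/2} :φ_{-k} φ_{k+2n}:` (a locally finite sum, normal
ordering being `:φ_a φ_b: = φ_a φ_b` if `b > 0` and `-φ_b φ_a` otherwise), satisfy the
Heisenberg commutation relations `[h_m, h_n] = m δ_{m+n,0}·1`. -/
theorem heisenberg_from_clifford {V : Type*} [AddCommGroup V] [Module ℚ V]
    (ψ : ℤ → Module.End ℚ V)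
    (hCl : ∀ a b : ℤ, ψ a * ψ b + ψ b * ψ a =
      if a + b = -1 then (1 : Module.End ℚ V) else 0)
    (hFock : ∀ v : V, ∃ N : ℤ, ∀ k : ℤ, N ≤ k → ψ k v = 0)
    (NO : ℤ → ℤ → Module.End ℚ V)
    (hNO : ∀ a b : ℤ, NO a b = if 0 ≤ b then ψ a * ψ b else -(ψ b * ψ a))
    (h : ℤ → Module.End ℚ V)
    (hh : ∀ (n : ℤ) (v : V), ∃ A : Finset ℤ, ∀ B : Finset ℤ, A ⊆ B →
      h n v = (1 / 2 : ℚ) • ∑ j ∈ B, ((-1 : ℚ) ^ (j + 1)) • NO (-j - 1) (j + 2 * n) v) :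
    ∀ m n : ℤ, ⁅h m, h n⁆ =
      if m + n = 0 then (m : ℚ) • (1 : Module.End ℚ V) else 0 := by
  intro m n
  refine LinearMap.ext fun v => ?_
  obtain ⟨N2a, hDa⟩ := double ψ hFock NO hNO h hh m n v
  obtain ⟨N2b, hDb⟩ := double ψ hFock NO hNO h hh n m v
  obtain ⟨N0, hN0f⟩ := hFock v
  set N : ℤ := max N0 0 with hNdef
  have hN0 : (0:ℤ) ≤ N := le_max_right _ _
  have hN : ∀ k, N ≤ k → ψ k v = 0 := fun k hk => hN0f k (le_trans (le_max_left _ _) hk)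
  set M : ℤ := max (max N2a N2b) (3*(N + 2*|m| + 2*|n|) + 10) with hMdef
  have hMa : N2a ≤ M := le_trans (le_max_left _ _) (le_max_left _ _)
  have hMb : N2b ≤ M := le_trans (le_max_right _ _) (le_max_left _ _)
  have hM3 : 3*(N + 2*|m| + 2*|n|) + 10 ≤ M := le_max_right _ _
  have hlie : ⁅h m, h n⁆ v = h m (h n v) - h n (h m v) := by
    rw [Ring.lie_def]
    rfl
  rw [hlie, hDa M hMa, hDb M hMb, ← smul_sub,
    NOdiff ψ hCl NO hNO m n M v,
    main_alg ψ hCl m n M v,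
    eval_sums ψ hCl m n M N |m| |n| v (neg_abs_le m) (le_abs_self m)
      (neg_abs_le n) (le_abs_self n) hN0 hN hM3]
  split_ifs with hc
  · rw [smul_smul, LinearMap.smul_apply, Module.End.one_apply]
    congr 1
    ring
  · rw [smul_zero, LinearMap.zero_apply]
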